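/- arXiv:2510.07911 — 7 statements merged into one kernel-verified Lean document; each statement's English description precedes it below -/
import Mathlib

section
/- There exists a unique t_max > 0 with ψ'(t_max) = 0; ψ is strictly increasing on (0, t_max] and strictly decreasing on [t_max, ∞); consequently ψ(t_max) = sup_{t>0} ψ(t), and ψ(t_max) > 0. -/
open Set Filter Topology

/-- There is a unique t_max > 0 with ψ'(t_max) = 0; ψ is strictly increasing on (0, t_max],
strictly decreasing on [t_max, ∞), ψ(t_max) is the (attained) supremum of ψ over (0,∞),
and ψ(t_max) > 0. -/
theorem stmt_3 (p q θ α A B C : ℝ)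
    (hα0 : 0 < α) (hα1 : α < 1) (hp : 1 < p) (hθ : 1 < θ) (hpq : p * θ < q)
    (hA : 0 < A) (hB : 0 < B) (hC : 0 < C)
    (ψ : ℝ → ℝ)
    (hψ : ∀ t, 0 < t →
      ψ t = A * t ^ (p - q) + B * t ^ (p * θ - q) - C * t ^ (1 - α - q)) :
    ∃ tmax > 0, deriv ψ tmax = 0 ∧ (∀ t, 0 < t → deriv ψ t = 0 → t = tmax) ∧
      StrictMonoOn ψ (Set.Ioc 0 tmax) ∧ StrictAntiOn ψ (Set.Ici tmax) ∧
      (∀ t, 0 < t → ψ t ≤ ψ tmax) ∧ 0 < ψ tmax := by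
  set r : ℝ := p - q with hr_def
  set s : ℝ := p * θ - q with hs_def
  set w : ℝ := 1 - α - q with hw_def
  have hps : p < p * θ := by nlinarith
  have hwr : w < r := by simp only [hr_def, hw_def]; nlinarith
  have hrs : r < s := by simp only [hr_def, hs_def]; nlinarith
  have hs0 : s < 0 := by simp only [hs_def]; linarith
  have hw0 : w < 0 := by linarith
  have hr0 : r < 0 := by linarith
  have hu : (0:ℝ) < r - w := by linarith
  have hv : (0:ℝ) < s - w := by linarith
  set φ : ℝ → ℝ := fun t => A * t ^ r + B * t ^ s - C * t ^ w with hφ_def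
  set g : ℝ → ℝ := fun t => A * r * t ^ (r - w) + B * s * t ^ (s - w) - C * w with hg_def
  -- derivative of φ
  have hφd : ∀ t : ℝ, 0 < t → HasDerivAt φ (t ^ (w - 1) * g t) t := by
    intro t ht
    have h1 := (Real.hasDerivAt_rpow_const (x := t) (p := r) (Or.inl ht.ne')).const_mul A
    have h2 := (Real.hasDerivAt_rpow_const (x := t) (p := s) (Or.inl ht.ne')).const_mul B
    have h3 := (Real.hasDerivAt_rpow_const (x := t) (p := w) (Or.inl ht.ne')).const_mul C
    have h := (h1.add h2).sub h3
    refine h.congr_deriv ?_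
    have e1 : t ^ (r - 1) = t ^ (w - 1) * t ^ (r - w) := by
      rw [← Real.rpow_add ht]; ring_nf
    have e2 : t ^ (s - 1) = t ^ (w - 1) * t ^ (s - w) := by
      rw [← Real.rpow_add ht]; ring_nf
    simp only [hg_def, e1, e2]; ring
  -- ψ agrees with φ near positive points
  have hev : ∀ t : ℝ, 0 < t → ψ =ᶠ[𝓝 t] φ := by
    intro t ht
    filter_upwards [isOpen_Ioi.mem_nhds ht] with x hx
    exact hψ x hx
  have hψd : ∀ t : ℝ, 0 < t → deriv ψ t = t ^ (w - 1) * g t := by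
    intro t ht
    rw [(hev t ht).deriv_eq, (hφd t ht).deriv]
  have hψc : ∀ t : ℝ, 0 < t → ContinuousAt ψ t := by
    intro t ht
    exact ((hφd t ht).continuousAt).congr ((hev t ht).symm)
  -- g is strictly decreasing on positives
  have hganti : ∀ x y : ℝ, 0 < x → x < y → g y < g x := by
    intro x y hx hxy
    have h1 : x ^ (r - w) < y ^ (r - w) := Real.rpow_lt_rpow hx.le hxy hu
    have h2 : x ^ (s - w) < y ^ (s - w) := Real.rpow_lt_rpow hx.le hxy hv
    have hAr : A * r < 0 := mul_neg_of_pos_of_neg hA hr0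
    have hBs : B * s < 0 := mul_neg_of_pos_of_neg hB hs0
    simp only [hg_def]
    nlinarith
  -- g continuous
  have c1 : Continuous fun t : ℝ => t ^ (r - w) :=
    continuous_iff_continuousAt.2 fun x => Real.continuousAt_rpow_const x _ (Or.inr hu.le)
  have c2 : Continuous fun t : ℝ => t ^ (s - w) :=
    continuous_iff_continuousAt.2 fun x => Real.continuousAt_rpow_const x _ (Or.inr hv.le)
  have hgc : Continuous g := by
    simp only [hg_def]
    exact ((continuous_const.mul c1).add (continuous_const.mul c2)).sub continuous_const
  -- g is positive near 0
  have hg0 : Tendsto g (𝓝 0) (𝓝 (A * r * (0:ℝ) ^ (r - w) + B * s * (0:ℝ) ^ (s - w) - C * w)) :=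
    hgc.continuousAt.tendsto
  have hg0' : Tendsto g (𝓝 0) (𝓝 (-(C * w))) := by
    simpa [Real.zero_rpow hu.ne', Real.zero_rpow hv.ne'] using hg0
  have hCw : (0:ℝ) < -(C * w) := by nlinarith
  obtain ⟨a, hga, ha0⟩ :
      ∃ a : ℝ, 0 < g a ∧ a ∈ Ioi (0:ℝ) := by
    have h : ∀ᶠ t in 𝓝[>] (0:ℝ), 0 < g t :=
      (hg0'.mono_left (nhdsWithin_le_nhds (s := Ioi (0:ℝ)))).eventually
        (eventually_gt_nhds hCw)
    exact (h.and self_mem_nhdsWithin).exists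
  -- g tends to -∞
  have hgbot : Tendsto g atTop atBot := by
    have t1 : Tendsto (fun t : ℝ => A * r * t ^ (r - w)) atTop atBot :=
      (tendsto_rpow_atTop hu).const_mul_atTop_of_neg (mul_neg_of_pos_of_neg hA hr0)
    have t2 : Tendsto (fun t : ℝ => B * s * t ^ (s - w)) atTop atBot :=
      (tendsto_rpow_atTop hv).const_mul_atTop_of_neg (mul_neg_of_pos_of_neg hB hs0)
    have t3 := (Filter.Tendsto.atBot_add_atBot t1 t2)
    simpa [hg_def, sub_eq_add_neg] using tendsto_atBot_add_const_right atTop (-(C * w)) t3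
  obtain ⟨b, hgb, hab⟩ : ∃ b : ℝ, g b < 0 ∧ a ≤ b :=
    ((hgbot.eventually (eventually_lt_atBot 0)).and (eventually_ge_atTop a)).exists
  -- root of g
  obtain ⟨tmax, htm_mem, hgtm⟩ : ∃ tm ∈ Icc a b, g tm = 0 := by
    have := intermediate_value_Icc' hab hgc.continuousOn (a := a) (b := b)
    have h0 : (0:ℝ) ∈ Icc (g b) (g a) := ⟨hgb.le, hga.le⟩
    obtain ⟨tm, htm, h⟩ := this h0
    exact ⟨tm, htm, h⟩
  have htm0 : 0 < tmax := lt_of_lt_of_le ha0 htm_mem.1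
  -- sign of g
  have hgpos : ∀ t : ℝ, 0 < t → t < tmax → 0 < g t := by
    intro t ht htt
    have := hganti t tmax ht htt
    rw [hgtm] at this; linarith
  have hgneg : ∀ t : ℝ, tmax < t → g t < 0 := by
    intro t htt
    have := hganti tmax t htm0 htt
    rw [hgtm] at this; linarith
  have hψd0 : deriv ψ tmax = 0 := by rw [hψd tmax htm0, hgtm, mul_zero]
  refine ⟨tmax, htm0, hψd0, ?_, ?_, ?_, ?_, ?_⟩
  · -- uniqueness
    intro t ht hdt
    rw [hψd t ht] at hdt
    have hne : t ^ (w - 1) ≠ 0 := (Real.rpow_pos_of_pos ht _).ne'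
    have hgt : g t = 0 := by
      rcases mul_eq_zero.1 hdt with h | h
      · exact absurd h hne
      · exact h
    by_contra hne'
    rcases lt_or_gt_of_ne hne' with h | h
    · have := hgpos t ht h; linarith
    · have := hgneg t h; linarith
  · -- strict mono on Ioc 0 tmax
    apply strictMonoOn_of_deriv_pos (convex_Ioc 0 tmax)
    · exact fun x hx => (hψc x hx.1).continuousWithinAt
    · intro x hx
      rw [interior_Ioc] at hx
      rw [hψd x hx.1]
      exact mul_pos (Real.rpow_pos_of_pos hx.1 _) (hgpos x hx.1 hx.2)
  · -- strict anti on Ici tmax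
    apply strictAntiOn_of_deriv_neg (convex_Ici tmax)
    · exact fun x hx => (hψc x (lt_of_lt_of_le htm0 hx)).continuousWithinAt
    · intro x hx
      rw [interior_Ici] at hx
      rw [hψd x (htm0.trans hx)]
      exact mul_neg_of_pos_of_neg (Real.rpow_pos_of_pos (htm0.trans hx) _) (hgneg x hx)
  · -- maximum
    intro t ht
    rcases le_or_gt t tmax with h | h
    · rcases eq_or_lt_of_le h with h' | h'
      · rw [h']
      · have hmono := strictMonoOn_of_deriv_pos (convex_Ioc 0 tmax)
          (fun x hx => (hψc x hx.1).continuousWithinAt)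
          (fun x hx => by
            rw [interior_Ioc] at hx
            rw [hψd x hx.1]
            exact mul_pos (Real.rpow_pos_of_pos hx.1 _) (hgpos x hx.1 hx.2))
        exact (hmono ⟨ht, h⟩ ⟨htm0, le_refl _⟩ h').le
    · have hanti := strictAntiOn_of_deriv_neg (convex_Ici tmax)
        (fun x hx => (hψc x (lt_of_lt_of_le htm0 hx)).continuousWithinAt)
        (fun x hx => by
          rw [interior_Ici] at hx
          rw [hψd x (htm0.trans hx)]
          exact mul_neg_of_pos_of_neg (Real.rpow_pos_of_pos (htm0.trans hx) _) (hgneg x hx))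
      exact (hanti (self_mem_Ici) h.le h).le
  · -- positivity of ψ tmax
    set X : ℝ := tmax ^ (r - w) with hX_def
    set Y : ℝ := tmax ^ (s - w) with hY_def
    have hX : 0 < X := Real.rpow_pos_of_pos htm0 _
    have hY : 0 < Y := Real.rpow_pos_of_pos htm0 _
    have hW : 0 < tmax ^ w := Real.rpow_pos_of_pos htm0 _
    have hgeq : A * r * X + B * s * Y - C * w = 0 := hgtm
    have key : 0 < A * X + B * Y - C := by nlinarith [mul_pos hA hX, mul_pos hB hY]
    have e1 : tmax ^ r = tmax ^ w * X := by
      rw [hX_def, ← Real.rpow_add htm0]; ring_nf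
    have e2 : tmax ^ s = tmax ^ w * Y := by
      rw [hY_def, ← Real.rpow_add htm0]; ring_nf
    have : ψ tmax = tmax ^ w * (A * X + B * Y - C) := by
      rw [hψ tmax htm0]
      simp only [← hr_def, ← hs_def, ← hw_def, e1, e2]; ring
    rw [this]
    exact mul_pos hW key
end

section
/- Let t_max > 0 be the unique critical point of ψ (its global maximizer). If D is a real number with 0 < q·D < ψ(t_max), then there exist t₁, t₂ with 0 < t₁ < t_max < t₂ such that ψ(t₁) = q·D = ψ(t₂), ψ'(t₁) > 0 and ψ'(t₂) < 0; moreover t₁ and t₂ are the only solutions of ψ(t) = q·D in (0,∞). -/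
open Set Filter Topology

/-- If t_max is the unique critical point and global maximizer of ψ and 0 < q·D < ψ(t_max),
then the equation ψ(t) = q·D has exactly two solutions t₁ < t_max < t₂ in (0,∞), with
ψ'(t₁) > 0 and ψ'(t₂) < 0. -/
theorem stmt_6 (p q θ α A B C D tmax : ℝ)
    (hα0 : 0 < α) (hα1 : α < 1) (hp : 1 < p) (hθ : 1 < θ) (hpq : p * θ < q)
    (hA : 0 < A) (hB : 0 < B) (hC : 0 < C)
    (ψ : ℝ → ℝ)
    (hψ : ∀ t, 0 < t →
      ψ t = A * t ^ (p - q) + B * t ^ (p * θ - q) - C * t ^ (1 - α - q))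
    (htmax : 0 < tmax) (hcrit : deriv ψ tmax = 0)
    (huniq : ∀ t, 0 < t → deriv ψ t = 0 → t = tmax)
    (hmax : ∀ t, 0 < t → ψ t ≤ ψ tmax)
    (hD0 : 0 < q * D) (hD : q * D < ψ tmax) :
    ∃ t₁ t₂ : ℝ, 0 < t₁ ∧ t₁ < tmax ∧ tmax < t₂ ∧
      ψ t₁ = q * D ∧ ψ t₂ = q * D ∧
      0 < deriv ψ t₁ ∧ deriv ψ t₂ < 0 ∧
      (∀ t, 0 < t → ψ t = q * D → t = t₁ ∨ t = t₂) := by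
  have hp0 : (0:ℝ) < p := lt_trans one_pos hp
  have hpθ : p < p * θ := by nlinarith
  have hq1 : 1 < q := by nlinarith
  set g : ℝ → ℝ := fun t => A * ((p - q) * t ^ (p - q - 1)) +
      B * ((p * θ - q) * t ^ (p * θ - q - 1)) - C * ((1 - α - q) * t ^ (1 - α - q - 1))
    with hg_def
  -- derivative of ψ on (0, ∞)
  have hderiv : ∀ t : ℝ, 0 < t → HasDerivAt ψ (g t) t := by
    intro t ht
    have d1 := (Real.hasDerivAt_rpow_const (x := t) (p := p - q) (Or.inl ht.ne')).const_mul A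
    have d2 := (Real.hasDerivAt_rpow_const (x := t) (p := p * θ - q) (Or.inl ht.ne')).const_mul B
    have d3 := (Real.hasDerivAt_rpow_const (x := t) (p := 1 - α - q) (Or.inl ht.ne')).const_mul C
    have h1 := (d1.add d2).sub d3
    apply h1.congr_of_eventuallyEq
    filter_upwards [isOpen_Ioi.mem_nhds (show t ∈ Ioi (0:ℝ) from ht)] with s hs
    exact hψ s hs
  have hdψ : ∀ t : ℝ, 0 < t → deriv ψ t = g t := fun t ht => (hderiv t ht).deriv
  have hψcont : ∀ t : ℝ, 0 < t → ContinuousAt ψ t := fun t ht => (hderiv t ht).continuousAt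
  -- continuity of g on (0, ∞)
  have hrc : ∀ (e : ℝ) (t : ℝ), 0 < t → ContinuousAt (fun x : ℝ => x ^ e) t :=
    fun e t ht => Real.continuousAt_rpow_const t e (Or.inl ht.ne')
  have hgc : ∀ t : ℝ, 0 < t → ContinuousAt g t := by
    intro t ht
    exact ((((hrc _ t ht).const_mul _).const_mul _).add
      (((hrc _ t ht).const_mul _).const_mul _)).sub (((hrc _ t ht).const_mul _).const_mul _)
  -- g ≠ 0 away from tmax
  have hgne : ∀ t : ℝ, 0 < t → t ≠ tmax → g t ≠ 0 := by
    intro t ht htne h0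
    exact htne (huniq t ht ((hdψ t ht).trans h0))
  -- g > 0 on (0, tmax)
  have gpos : ∀ t : ℝ, 0 < t → t < tmax → 0 < g t := by
    intro t ht htm
    rcases lt_trichotomy (g t) 0 with hneg | h0 | hpos
    · exfalso
      -- then g < 0 on (t, tmax)
      have hneg' : ∀ s, s ∈ Ioo t tmax → g s < 0 := by
        intro s hs
        rcases lt_trichotomy (g s) 0 with h | h | h
        · exact h
        · exact absurd h (hgne s (ht.trans hs.1) (ne_of_lt hs.2))
        · exfalso
          have hcont : ContinuousOn g (Icc t s) := fun x hx =>
            (hgc x (lt_of_lt_of_le ht hx.1)).continuousWithinAt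
          obtain ⟨c, hc, hc0⟩ := intermediate_value_Icc (le_of_lt hs.1) hcont
            (show (0:ℝ) ∈ Icc (g t) (g s) from ⟨hneg.le, h.le⟩)
          have hc0' : c ≠ tmax := ne_of_lt (lt_of_le_of_lt hc.2 hs.2)
          exact hgne c (lt_of_lt_of_le ht hc.1) hc0' hc0
      -- then ψ strictly decreasing on [t, tmax], contradicting maximality
      have hanti : StrictAntiOn ψ (Icc t tmax) := by
        apply strictAntiOn_of_deriv_neg (convex_Icc t tmax)
        · exact fun x hx => (hψcont x (lt_of_lt_of_le ht hx.1)).continuousWithinAt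
        · intro x hx
          rw [interior_Icc] at hx
          rw [hdψ x (ht.trans hx.1)]
          exact hneg' x hx
      have := hanti (left_mem_Icc.2 htm.le) (right_mem_Icc.2 htm.le) htm
      exact absurd (hmax t ht) (not_le.2 this)
    · exact absurd h0 (hgne t ht (ne_of_lt htm))
    · exact hpos
  -- g < 0 on (tmax, ∞)
  have gneg : ∀ t : ℝ, tmax < t → g t < 0 := by
    intro t htm
    have ht : 0 < t := htmax.trans htm
    rcases lt_trichotomy (g t) 0 with hneg | h0 | hpos
    · exact hneg
    · exact absurd h0 (hgne t ht (ne_of_gt htm))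
    · exfalso
      have hpos' : ∀ s, s ∈ Ioo tmax t → 0 < g s := by
        intro s hs
        rcases lt_trichotomy (g s) 0 with h | h | h
        · exfalso
          have hcont : ContinuousOn g (Icc s t) := fun x hx =>
            (hgc x (lt_of_lt_of_le (htmax.trans hs.1) hx.1)).continuousWithinAt
          obtain ⟨c, hc, hc0⟩ := intermediate_value_Icc (le_of_lt hs.2) hcont
            (show (0:ℝ) ∈ Icc (g s) (g t) from ⟨h.le, hpos.le⟩)
          have hc0' : c ≠ tmax := ne_of_gt (lt_of_lt_of_le hs.1 hc.1)
          exact hgne c (htmax.trans (lt_of_lt_of_le hs.1 hc.1)) hc0' hc0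
        · exact absurd h (hgne s (htmax.trans hs.1) (ne_of_gt hs.1))
        · exact h
      have hmono : StrictMonoOn ψ (Icc tmax t) := by
        apply strictMonoOn_of_deriv_pos (convex_Icc tmax t)
        · exact fun x hx => (hψcont x (lt_of_lt_of_le htmax hx.1)).continuousWithinAt
        · intro x hx
          rw [interior_Icc] at hx
          rw [hdψ x (htmax.trans hx.1)]
          exact hpos' x hx
      have := hmono (left_mem_Icc.2 htm.le) (right_mem_Icc.2 htm.le) htm
      exact absurd (hmax t ht) (not_le.2 this)
  -- strict monotonicity of ψ
  have hmono : StrictMonoOn ψ (Ioc 0 tmax) := by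
    apply strictMonoOn_of_deriv_pos (convex_Ioc 0 tmax)
    · exact fun x hx => (hψcont x hx.1).continuousWithinAt
    · intro x hx
      rw [interior_Ioc] at hx
      rw [hdψ x hx.1]
      exact gpos x hx.1 hx.2
  have hanti : StrictAntiOn ψ (Ici tmax) := by
    apply strictAntiOn_of_deriv_neg (convex_Ici tmax)
    · exact fun x hx => (hψcont x (lt_of_lt_of_le htmax hx)).continuousWithinAt
    · intro x hx
      rw [interior_Ici] at hx
      rw [hdψ x (htmax.trans hx)]
      exact gneg x hx
  -- ψ → -∞ as t → 0⁺
  have key : ∀ t : ℝ, 0 < t →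
      ψ t = t ^ (1 - α - q) * (A * t ^ (p - 1 + α) + B * t ^ (p * θ - 1 + α) - C) := by
    intro t ht
    have e1 : t ^ (p - q) = t ^ (1 - α - q) * t ^ (p - 1 + α) := by
      rw [← Real.rpow_add ht]; ring_nf
    have e2 : t ^ (p * θ - q) = t ^ (1 - α - q) * t ^ (p * θ - 1 + α) := by
      rw [← Real.rpow_add ht]; ring_nf
    rw [hψ t ht, e1, e2]; ring
  have he : (0:ℝ) < q + α - 1 := by linarith
  have hpow : Tendsto (fun t : ℝ => t ^ (1 - α - q)) (𝓝[>] (0:ℝ)) atTop := by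
    have h1 : Tendsto (fun t : ℝ => t ^ (q + α - 1)) (𝓝[>] (0:ℝ)) (𝓝[>] (0:ℝ)) := by
      rw [tendsto_nhdsWithin_iff]
      constructor
      · have := (Real.continuousAt_rpow_const 0 (q + α - 1) (Or.inr he.le)).tendsto
        rw [Real.zero_rpow he.ne'] at this
        exact this.mono_left nhdsWithin_le_nhds
      · filter_upwards [self_mem_nhdsWithin] with t ht
        exact Real.rpow_pos_of_pos ht _
    have h2 := tendsto_inv_nhdsGT_zero.comp h1
    apply h2.congr'
    filter_upwards [self_mem_nhdsWithin] with t (ht : 0 < t)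
    show (t ^ (q + α - 1))⁻¹ = t ^ (1 - α - q)
    rw [← Real.rpow_neg ht.le]
    norm_num
    ring_nf
  have hbr : Tendsto (fun t : ℝ => A * t ^ (p - 1 + α) + B * t ^ (p * θ - 1 + α) - C)
      (𝓝[>] (0:ℝ)) (𝓝 (-C)) := by
    have hz : ∀ e : ℝ, 0 < e → Tendsto (fun t : ℝ => t ^ e) (𝓝[>] (0:ℝ)) (𝓝 0) := by
      intro e hepos
      have := (Real.continuousAt_rpow_const 0 e (Or.inr hepos.le)).tendsto
      rw [Real.zero_rpow hepos.ne'] at this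
      exact this.mono_left nhdsWithin_le_nhds
    have h1 := (hz (p - 1 + α) (by linarith)).const_mul A
    have h2 := (hz (p * θ - 1 + α) (by linarith)).const_mul B
    have := (h1.add h2).sub (tendsto_const_nhds (x := C))
    simpa using this
  have hψbot : Tendsto ψ (𝓝[>] (0:ℝ)) atBot := by
    have := hpow.atTop_mul_neg (show -C < 0 by linarith) hbr
    apply this.congr'
    filter_upwards [self_mem_nhdsWithin] with t (ht : 0 < t)
    exact (key t ht).symm
  -- find a point a ∈ (0, tmax) with ψ a < q*D
  obtain ⟨a, haD, ha⟩ : ∃ a, ψ a < q * D ∧ a ∈ Ioo (0:ℝ) tmax := by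
    have hmem : Ioo (0:ℝ) tmax ∈ 𝓝[>] (0:ℝ) :=
      Ioo_mem_nhdsGT_of_mem ⟨le_refl 0, htmax⟩
    exact ((hψbot.eventually (eventually_lt_atBot (q * D))).and
      (eventually_of_mem hmem (fun _ h => h))).exists
  -- ψ → 0 as t → ∞
  have hψ0 : Tendsto ψ atTop (𝓝 (0:ℝ)) := by
    have hz : ∀ e : ℝ, 0 < e → Tendsto (fun t : ℝ => t ^ (-e)) atTop (𝓝 (0:ℝ)) :=
      fun e hepos => tendsto_rpow_neg_atTop hepos
    have h1 := (hz (q - p) (by linarith)).const_mul A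
    have h2 := (hz (q - p * θ) (by linarith)).const_mul B
    have h3 := (hz (q - (1 - α)) (by linarith)).const_mul C
    have h := (h1.add h2).sub h3
    have h' : Tendsto (fun t : ℝ => A * t ^ (p - q) + B * t ^ (p * θ - q) - C * t ^ (1 - α - q))
        atTop (𝓝 (0:ℝ)) := by
      have e1 : p - q = -(q - p) := by ring
      have e2 : p * θ - q = -(q - p * θ) := by ring
      have e3 : 1 - α - q = -(q - (1 - α)) := by ring
      rw [e1, e2, e3]
      simpa using h
    apply h'.congr'
    filter_upwards [eventually_gt_atTop (0:ℝ)] with t ht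
    exact (hψ t ht).symm
  obtain ⟨b, hbD, hb⟩ : ∃ b, ψ b < q * D ∧ tmax < b := by
    exact ((hψ0.eventually_lt_const hD0).and (eventually_gt_atTop tmax)).exists
  -- IVT on [a, tmax]
  obtain ⟨t₁, ht₁mem, ht₁eq⟩ : ∃ t₁ ∈ Icc a tmax, ψ t₁ = q * D := by
    have hcont : ContinuousOn ψ (Icc a tmax) := fun x hx =>
      (hψcont x (lt_of_lt_of_le ha.1 hx.1)).continuousWithinAt
    obtain ⟨t₁, ht₁, heq⟩ := intermediate_value_Icc ha.2.le hcont
      (show q * D ∈ Icc (ψ a) (ψ tmax) from ⟨haD.le, hD.le⟩)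
    exact ⟨t₁, ht₁, heq⟩
  -- IVT on [tmax, b]
  obtain ⟨t₂, ht₂mem, ht₂eq⟩ : ∃ t₂ ∈ Icc tmax b, ψ t₂ = q * D := by
    have hcont : ContinuousOn ψ (Icc tmax b) := fun x hx =>
      (hψcont x (lt_of_lt_of_le htmax hx.1)).continuousWithinAt
    obtain ⟨t₂, ht₂, heq⟩ := intermediate_value_Icc' hb.le hcont
      (show q * D ∈ Icc (ψ b) (ψ tmax) from ⟨hbD.le, hD.le⟩)
    exact ⟨t₂, ht₂, heq⟩
  have ht₁pos : 0 < t₁ := lt_of_lt_of_le ha.1 ht₁mem.1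
  have ht₁lt : t₁ < tmax :=
    lt_of_le_of_ne ht₁mem.2 (fun h => by rw [h] at ht₁eq; exact absurd ht₁eq (ne_of_lt hD).symm)
  have ht₂gt : tmax < t₂ :=
    lt_of_le_of_ne ht₂mem.1 (fun h => by rw [← h] at ht₂eq; exact absurd ht₂eq (ne_of_lt hD).symm)
  refine ⟨t₁, t₂, ht₁pos, ht₁lt, ht₂gt, ht₁eq, ht₂eq, ?_, ?_, ?_⟩
  · rw [hdψ t₁ ht₁pos]; exact gpos t₁ ht₁pos ht₁lt
  · rw [hdψ t₂ (htmax.trans ht₂gt)]; exact gneg t₂ ht₂gt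
  · intro t ht htD
    have htne : t ≠ tmax := fun h => by rw [h] at htD; exact absurd htD (ne_of_gt hD)
    rcases lt_or_gt_of_ne htne with hlt | hgt
    · left
      exact hmono.injOn ⟨ht, hlt.le⟩ ⟨ht₁pos, ht₁lt.le⟩ (htD.trans ht₁eq.symm)
    · right
      exact hanti.injOn (le_of_lt hgt) (le_of_lt ht₂gt) (htD.trans ht₂eq.symm)
end

section
/- Suppose D > 0 and q·D < sup_{t>0} ψ(t), and let 0 < t₁ < t_max < t₂ be the two solutions of ψ(t) = q·D, where t_max is the unique maximizer of ψ. Then φ is strictly decreasing on (0, t₁), strictly increasing on (t₁, t₂), and strictly decreasing on (t₂, ∞); in particular φ(t₁) = min{ φ(t) : 0 < t ≤ t₁ } (indeed φ(t₁) ≤ φ(t) for all 0 < t ≤ t₂) and φ(t₂) = max{ φ(t) : t ≥ t_max }. -/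
open Set Filter Topology

private lemma stmt7_deriv (p q θ α A B C D : ℝ)
    (hp : 1 < p) (hθ : 1 < θ) (hα0 : 0 < α) (hα1 : α < 1) (hpq : p * θ < q)
    {t : ℝ} (ht : 0 < t) :
    HasDerivAt (fun t : ℝ => t ^ p / p * A + t ^ (p * θ) / (p * θ) * B
        - t ^ (1 - α) / (1 - α) * C - t ^ q * D)
      (t ^ (q - 1) *
        ((A * t ^ (p - q) + B * t ^ (p * θ - q) - C * t ^ (1 - α - q)) - q * D)) t := by
  have hp0 : p ≠ 0 := by positivity
  have hpθ0 : p * θ ≠ 0 := by positivity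
  have hα0' : (1 : ℝ) - α ≠ 0 := by linarith
  have h1 := ((Real.hasDerivAt_rpow_const (x := t) (p := p)
    (Or.inl ht.ne')).div_const p).mul_const A
  have h2 := ((Real.hasDerivAt_rpow_const (x := t) (p := p * θ)
    (Or.inl ht.ne')).div_const (p * θ)).mul_const B
  have h3 := ((Real.hasDerivAt_rpow_const (x := t) (p := 1 - α)
    (Or.inl ht.ne')).div_const (1 - α)).mul_const C
  have h4 := (Real.hasDerivAt_rpow_const (x := t) (p := q) (Or.inl ht.ne')).mul_const D
  have h := ((h1.add h2).sub h3).sub h4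
  refine (h.congr_deriv ?_).congr_of_eventuallyEq (Filter.Eventually.of_forall (fun _ => rfl))
  symm
  have e1 : t ^ (q - 1) * t ^ (p - q) = t ^ (p - 1) := by
    rw [← Real.rpow_add ht]; congr 1; ring
  have e2 : t ^ (q - 1) * t ^ (p * θ - q) = t ^ (p * θ - 1) := by
    rw [← Real.rpow_add ht]; congr 1; ring
  have e3 : t ^ (q - 1) * t ^ (1 - α - q) = t ^ (1 - α - 1) := by
    rw [← Real.rpow_add ht]; congr 1; ring
  rw [mul_div_cancel_left₀ _ hp0, mul_div_cancel_left₀ _ hpθ0, mul_div_cancel_left₀ _ hα0']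
  linear_combination A * e1 + B * e2 - C * e3

/-- If D > 0, q·D < sup_{t>0} ψ(t) and t₁ < t_max < t₂ are the two solutions of ψ(t) = q·D,
then the fiber map φ strictly decreases on (0,t₁), strictly increases on (t₁,t₂), strictly
decreases on (t₂,∞); in particular φ(t₁) ≤ φ(t) for all 0 < t ≤ t₂ and φ(t₂) = max over
[t_max, ∞) of φ. -/
theorem stmt_7 (p q θ α A B C D tmax t₁ t₂ : ℝ)
    (hα0 : 0 < α) (hα1 : α < 1) (hp : 1 < p) (hθ : 1 < θ) (hpq : p * θ < q)
    (hA : 0 < A) (hB : 0 < B) (hC : 0 < C)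
    (ψ φ : ℝ → ℝ)
    (hψ : ∀ t, 0 < t →
      ψ t = A * t ^ (p - q) + B * t ^ (p * θ - q) - C * t ^ (1 - α - q))
    (hφ : ∀ t, 0 < t →
      φ t = t ^ p / p * A + t ^ (p * θ) / (p * θ) * B
        - t ^ (1 - α) / (1 - α) * C - t ^ q * D)
    (hD : 0 < D) (hsup : q * D < sSup (ψ '' Set.Ioi 0))
    (htmax : 0 < tmax) (hmax : ∀ t, 0 < t → ψ t ≤ ψ tmax)
    (ht₁ : 0 < t₁) (h₁m : t₁ < tmax) (hm₂ : tmax < t₂)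
    (hψ₁ : ψ t₁ = q * D) (hψ₂ : ψ t₂ = q * D)
    (honly : ∀ t, 0 < t → ψ t = q * D → t = t₁ ∨ t = t₂) :
    StrictAntiOn φ (Set.Ioo 0 t₁) ∧ StrictMonoOn φ (Set.Ioo t₁ t₂) ∧
      StrictAntiOn φ (Set.Ioi t₂) ∧
      (∀ t, 0 < t → t ≤ t₂ → φ t₁ ≤ φ t) ∧
      (∀ t, tmax ≤ t → φ t ≤ φ t₂) := by
  have hq1 : 1 < q := by nlinarith
  set g : ℝ → ℝ := fun t => t ^ p / p * A + t ^ (p * θ) / (p * θ) * B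
      - t ^ (1 - α) / (1 - α) * C - t ^ q * D with hg
  -- continuity of ψ on compact subintervals of (0,∞)
  have hψcont : ∀ a b : ℝ, 0 < a → ContinuousOn ψ (Icc a b) := by
    intro a b ha
    have hform : ContinuousOn
        (fun t : ℝ => A * t ^ (p - q) + B * t ^ (p * θ - q) - C * t ^ (1 - α - q))
        (Icc a b) := by
      intro t htt
      have ht0 : t ≠ 0 := (lt_of_lt_of_le ha htt.1).ne'
      exact (((continuousAt_const.mul
          (Real.continuousAt_rpow_const t _ (Or.inl ht0))).add
        (continuousAt_const.mul
          (Real.continuousAt_rpow_const t _ (Or.inl ht0)))).sub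
        (continuousAt_const.mul
          (Real.continuousAt_rpow_const t _ (Or.inl ht0)))).continuousWithinAt
    exact hform.congr (fun t htt => hψ t (lt_of_lt_of_le ha htt.1))
  -- ψ tmax > qD
  have hψmax : q * D < ψ tmax := by
    have hub : sSup (ψ '' Ioi 0) ≤ ψ tmax := by
      refine csSup_le ⟨ψ tmax, Set.mem_image_of_mem ψ (Set.mem_Ioi.mpr htmax)⟩ ?_
      rintro x ⟨t, ht, rfl⟩
      exact hmax t ht
    linarith
  -- small s with ψ s < qD
  have hsmall : ∀ ε : ℝ, 0 < ε → ∃ s, 0 < s ∧ s < ε ∧ ψ s < q * D := by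
    intro ε hε
    have he1 : 0 < p - 1 + α := by linarith
    have he2 : 0 < p * θ - 1 + α := by nlinarith
    have htend : Tendsto (fun s : ℝ => A * s ^ (p - 1 + α) + B * s ^ (p * θ - 1 + α))
        (𝓝[>] (0 : ℝ)) (𝓝 0) := by
      have c1 : ContinuousAt (fun s : ℝ => s ^ (p - 1 + α)) 0 :=
        Real.continuousAt_rpow_const 0 _ (Or.inr he1.le)
      have c2 : ContinuousAt (fun s : ℝ => s ^ (p * θ - 1 + α)) 0 :=
        Real.continuousAt_rpow_const 0 _ (Or.inr he2.le)
      have hca : ContinuousAt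
          (fun s : ℝ => A * s ^ (p - 1 + α) + B * s ^ (p * θ - 1 + α)) 0 :=
        (continuousAt_const.mul c1).add (continuousAt_const.mul c2)
      have := hca.tendsto
      simp only [Real.zero_rpow he1.ne', Real.zero_rpow he2.ne', mul_zero, add_zero] at this
      exact this.mono_left nhdsWithin_le_nhds
    have hev : ∀ᶠ s in 𝓝[>] (0 : ℝ),
        A * s ^ (p - 1 + α) + B * s ^ (p * θ - 1 + α) < C :=
      htend.eventually_lt_const hC
    have hev2 : ∀ᶠ s in 𝓝[>] (0 : ℝ), s ∈ Ioo (0 : ℝ) ε :=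
      Filter.eventually_mem_set.mpr (Ioo_mem_nhdsGT_of_mem ⟨le_refl 0, hε⟩)
    obtain ⟨s, h1, h2⟩ := (hev.and hev2).exists
    refine ⟨s, h2.1, h2.2, ?_⟩
    have hs0 : (0:ℝ) < s := h2.1
    have key : A * s ^ (p - q) + B * s ^ (p * θ - q) - C * s ^ (1 - α - q) < 0 := by
      have e1 : s ^ (1 - α - q) * s ^ (p - 1 + α) = s ^ (p - q) := by
        rw [← Real.rpow_add hs0]; congr 1; ring
      have e2 : s ^ (1 - α - q) * s ^ (p * θ - 1 + α) = s ^ (p * θ - q) := by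
        rw [← Real.rpow_add hs0]; congr 1; ring
      have hpos : (0:ℝ) < s ^ (1 - α - q) := Real.rpow_pos_of_pos hs0 _
      rw [← e1, ← e2, show A * (s ^ (1 - α - q) * s ^ (p - 1 + α))
          + B * (s ^ (1 - α - q) * s ^ (p * θ - 1 + α)) - C * s ^ (1 - α - q)
          = s ^ (1 - α - q) * (A * s ^ (p - 1 + α) + B * s ^ (p * θ - 1 + α) - C) by ring]
      exact mul_neg_of_pos_of_neg hpos (by linarith)
    rw [hψ s hs0]
    nlinarith
  -- large s with ψ s < qD
  have hlarge : ∀ M : ℝ, ∃ s, M < s ∧ 0 < s ∧ ψ s < q * D := by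
    intro M
    have t1 : Tendsto (fun s : ℝ => s ^ (p - q)) atTop (𝓝 0) := by
      have := tendsto_rpow_neg_atTop (y := q - p) (by nlinarith)
      simpa [neg_sub] using this
    have t2 : Tendsto (fun s : ℝ => s ^ (p * θ - q)) atTop (𝓝 0) := by
      have := tendsto_rpow_neg_atTop (y := q - p * θ) (by linarith)
      simpa [neg_sub] using this
    have htend : Tendsto (fun s : ℝ => A * s ^ (p - q) + B * s ^ (p * θ - q)) atTop (𝓝 0) := by
      have := (t1.const_mul A).add (t2.const_mul B)
      simpa using this
    have hev : ∀ᶠ s in atTop, A * s ^ (p - q) + B * s ^ (p * θ - q) < q * D :=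
      htend.eventually_lt_const (by positivity)
    obtain ⟨s, h1, h2⟩ := (hev.and (eventually_gt_atTop (max M 0))).exists
    have hs0 : (0:ℝ) < s := lt_of_le_of_lt (le_max_right M 0) h2
    refine ⟨s, lt_of_le_of_lt (le_max_left M 0) h2, hs0, ?_⟩
    rw [hψ s hs0]
    have : (0:ℝ) < C * s ^ (1 - α - q) := by positivity
    linarith
  -- sign of ψ - qD on the three intervals
  have sign_left : ∀ t, 0 < t → t < t₁ → ψ t < q * D := by
    intro t ht0 ht1
    by_contra h
    push_neg at h
    have hne : ψ t ≠ q * D := by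
      intro he
      rcases honly t ht0 he with rfl | rfl
      · exact lt_irrefl _ ht1
      · linarith
    have hgt : q * D < ψ t := lt_of_le_of_ne h (Ne.symm hne)
    obtain ⟨s, hs0, hst, hsψ⟩ := hsmall t ht0
    obtain ⟨c, hcmem, hceq⟩ := intermediate_value_Icc hst.le (hψcont s t hs0) ⟨hsψ.le, hgt.le⟩
    rcases honly c (lt_of_lt_of_le hs0 hcmem.1) hceq with rfl | rfl
    · linarith [hcmem.2]
    · linarith [hcmem.2]
  have sign_mid : ∀ t, t₁ < t → t < t₂ → q * D < ψ t := by
    intro t hta htb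
    have ht0 : 0 < t := ht₁.trans hta
    by_contra h
    push_neg at h
    have hne : ψ t ≠ q * D := by
      intro he
      rcases honly t ht0 he with rfl | rfl
      · exact lt_irrefl _ hta
      · exact lt_irrefl _ htb
    have hlt : ψ t < q * D := lt_of_le_of_ne h hne
    rcases lt_or_ge t tmax with hc | hc
    · obtain ⟨c, hcmem, hceq⟩ := intermediate_value_Icc hc.le (hψcont t tmax ht0)
        ⟨hlt.le, hψmax.le⟩
      rcases honly c (lt_of_lt_of_le ht0 hcmem.1) hceq with rfl | rfl
      · linarith [hcmem.1]
      · linarith [hcmem.2]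
    · obtain ⟨c, hcmem, hceq⟩ := intermediate_value_Icc' hc (hψcont tmax t htmax)
        ⟨hlt.le, hψmax.le⟩
      rcases honly c (lt_of_lt_of_le htmax hcmem.1) hceq with rfl | rfl
      · linarith [hcmem.1]
      · linarith [hcmem.2]
  have sign_right : ∀ t, t₂ < t → ψ t < q * D := by
    intro t ht2
    have ht0 : 0 < t := lt_trans (lt_trans htmax hm₂) ht2
    by_contra h
    push_neg at h
    have hne : ψ t ≠ q * D := by
      intro he
      rcases honly t ht0 he with rfl | rfl
      · linarith
      · exact lt_irrefl _ ht2
    have hgt : q * D < ψ t := lt_of_le_of_ne h (Ne.symm hne)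
    obtain ⟨s, hts, hs0, hsψ⟩ := hlarge t
    obtain ⟨c, hcmem, hceq⟩ := intermediate_value_Icc' hts.le (hψcont t s ht0)
      ⟨hsψ.le, hgt.le⟩
    rcases honly c (lt_of_lt_of_le ht0 hcmem.1) hceq with rfl | rfl
    · linarith [hcmem.1]
    · linarith [hcmem.1]
  -- derivative of g
  have hderiv : ∀ t : ℝ, 0 < t → HasDerivAt g (t ^ (q - 1) * (ψ t - q * D)) t := by
    intro t ht
    have := stmt7_deriv p q θ α A B C D hp hθ hα0 hα1 hpq ht
    rwa [← hψ t ht] at this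
  have hgcont : ∀ s : Set ℝ, s ⊆ Ioi 0 → ContinuousOn g s := by
    intro s hs t hts
    exact (hderiv t (hs hts)).continuousAt.continuousWithinAt
  -- monotonicity of g on closed pieces
  have gA1 : StrictAntiOn g (Ioc 0 t₁) := by
    apply strictAntiOn_of_deriv_neg (convex_Ioc 0 t₁) (hgcont _ (fun x hx => hx.1))
    intro x hx
    rw [interior_Ioc] at hx
    rw [(hderiv x hx.1).deriv]
    exact mul_neg_of_pos_of_neg (Real.rpow_pos_of_pos hx.1 _)
      (by linarith [sign_left x hx.1 hx.2])
  have gM : StrictMonoOn g (Icc t₁ t₂) := by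
    apply strictMonoOn_of_deriv_pos (convex_Icc t₁ t₂)
      (hgcont _ (fun x hx => lt_of_lt_of_le ht₁ hx.1))
    intro x hx
    rw [interior_Icc] at hx
    rw [(hderiv x (ht₁.trans hx.1)).deriv]
    exact mul_pos (Real.rpow_pos_of_pos (ht₁.trans hx.1) _)
      (by linarith [sign_mid x hx.1 hx.2])
  have ht₂0 : 0 < t₂ := lt_trans (lt_trans ht₁ h₁m) hm₂
  have gA2 : StrictAntiOn g (Ici t₂) := by
    apply strictAntiOn_of_deriv_neg (convex_Ici t₂)
      (hgcont _ (fun x hx => lt_of_lt_of_le ht₂0 hx))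
    intro x hx
    rw [interior_Ici] at hx
    rw [(hderiv x (ht₂0.trans hx)).deriv]
    exact mul_neg_of_pos_of_neg (Real.rpow_pos_of_pos (ht₂0.trans hx) _)
      (by linarith [sign_right x hx])
  -- transfer to φ
  have hφg : ∀ t : ℝ, 0 < t → φ t = g t := hφ
  have φA1 : StrictAntiOn φ (Ioc 0 t₁) := by
    intro x hx y hy hxy
    rw [hφg x hx.1, hφg y hy.1]
    exact gA1 hx hy hxy
  have φM : StrictMonoOn φ (Icc t₁ t₂) := by
    intro x hx y hy hxy
    rw [hφg x (lt_of_lt_of_le ht₁ hx.1), hφg y (lt_of_lt_of_le ht₁ hy.1)]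
    exact gM hx hy hxy
  have φA2 : StrictAntiOn φ (Ici t₂) := by
    intro x hx y hy hxy
    rw [hφg x (lt_of_lt_of_le ht₂0 hx), hφg y (lt_of_lt_of_le ht₂0 hy)]
    exact gA2 hx hy hxy
  refine ⟨φA1.mono Ioo_subset_Ioc_self, φM.mono Ioo_subset_Icc_self, φA2.mono Ioi_subset_Ici_self,
    ?_, ?_⟩
  · intro t ht0 ht2
    rcases lt_trichotomy t t₁ with h | h | h
    · exact (φA1 ⟨ht0, h.le⟩ ⟨ht₁, le_refl t₁⟩ h).le
    · rw [h]
    · exact (φM ⟨le_refl t₁, by linarith⟩ ⟨h.le, ht2⟩ h).le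
  · intro t ht
    rcases le_or_gt t t₂ with h | h
    · exact φM.monotoneOn ⟨h₁m.le.trans ht, h⟩ ⟨(h₁m.trans hm₂).le, le_refl t₂⟩ h
    · exact (φA2 (le_refl t₂) (mem_Ici.mpr h.le) h).le
end

section
/- If D ≤ 0, then there exists a unique t₃ > 0 with ψ(t₃) = q·D; moreover t₃ < t_max (the unique maximizer of ψ), ψ'(t₃) > 0, and the fiber map φ attains its global infimum over (0,∞) at t₃, i.e. φ(t₃) = inf_{t>0} φ(t). -/
open Set Filter Topology

/-- If D ≤ 0 then ψ(t) = q·D has a unique solution t₃ > 0; moreover t₃ < t_max (the maximizer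
of ψ), ψ'(t₃) > 0, and the fiber map φ attains its global infimum over (0,∞) at t₃. -/
theorem stmt_8 (p q θ α A B C D tmax : ℝ)
    (hα0 : 0 < α) (hα1 : α < 1) (hp : 1 < p) (hθ : 1 < θ) (hpq : p * θ < q)
    (hA : 0 < A) (hB : 0 < B) (hC : 0 < C)
    (ψ φ : ℝ → ℝ)
    (hψ : ∀ t, 0 < t →
      ψ t = A * t ^ (p - q) + B * t ^ (p * θ - q) - C * t ^ (1 - α - q))
    (hφ : ∀ t, 0 < t →
      φ t = t ^ p / p * A + t ^ (p * θ) / (p * θ) * B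
        - t ^ (1 - α) / (1 - α) * C - t ^ q * D)
    (htmax : 0 < tmax) (hmax : ∀ t, 0 < t → ψ t ≤ ψ tmax)
    (hD : D ≤ 0) :
    ∃ t₃ > 0, ψ t₃ = q * D ∧ (∀ t, 0 < t → ψ t = q * D → t = t₃) ∧
      t₃ < tmax ∧ 0 < deriv ψ t₃ ∧ (∀ t, 0 < t → φ t₃ ≤ φ t) := by
  have hp0 : (0:ℝ) < p := by linarith
  have hpθ : p < p * θ := by nlinarith
  have hq : 1 < q := by nlinarith
  have hq0 : (0:ℝ) < q := by linarith
  have hqp : p < q := lt_trans hpθ hpq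
  have hqα : (0:ℝ) < q + α - 1 := by linarith
  have hpα : (0:ℝ) < p + α - 1 := by linarith
  have hpθα : (0:ℝ) < p * θ + α - 1 := by nlinarith
  set f : ℝ → ℝ := fun t => A * t ^ (p - q) + B * t ^ (p * θ - q) - C * t ^ (1 - α - q) with hfdef
  set f' : ℝ → ℝ := fun t => A * ((p - q) * t ^ (p - q - 1)) + B * ((p * θ - q) * t ^ (p * θ - q - 1)) - C * ((1 - α - q) * t ^ (1 - α - q - 1)) with hf'def
  set h : ℝ → ℝ := fun t => C * (q + α - 1) - A * (q - p) * t ^ (p + α - 1) - B * (q - p * θ) * t ^ (p * θ + α - 1) with hhdef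
  have hψf : ∀ t : ℝ, 0 < t → ψ t = f t := fun t ht => hψ t ht
  have hder : ∀ t : ℝ, 0 < t → HasDerivAt f (f' t) t := by
    intro t ht
    have h1 := ((Real.hasDerivAt_rpow_const (p := p - q) (Or.inl ht.ne'))).const_mul A
    have h2 := ((Real.hasDerivAt_rpow_const (p := p * θ - q) (Or.inl ht.ne'))).const_mul B
    have h3 := ((Real.hasDerivAt_rpow_const (p := 1 - α - q) (Or.inl ht.ne'))).const_mul C
    exact (h1.add h2).sub h3
  have hfh : ∀ t : ℝ, 0 < t → f' t = h t * t ^ (-(q + α)) := by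
    intro t ht
    simp only [hf'def, hhdef]
    rw [show p - q - 1 = (p + α - 1) + -(q + α) by ring,
        show p * θ - q - 1 = (p * θ + α - 1) + -(q + α) by ring,
        show 1 - α - q - 1 = 0 + -(q + α) by ring,
        Real.rpow_add ht, Real.rpow_add ht, Real.rpow_add ht, Real.rpow_zero]
    ring
  have hanti : ∀ x y : ℝ, 0 < x → x < y → h y < h x := by
    intro x y hx hxy
    have h1 : x ^ (p + α - 1) < y ^ (p + α - 1) := Real.rpow_lt_rpow hx.le hxy hpα
    have h2 : x ^ (p * θ + α - 1) < y ^ (p * θ + α - 1) := Real.rpow_lt_rpow hx.le hxy hpθα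
    simp only [hhdef]
    have g1 : 0 < A * (q - p) * (y ^ (p + α - 1) - x ^ (p + α - 1)) := by
      apply mul_pos (mul_pos hA (by linarith)) (by linarith)
    have g2 : 0 < B * (q - p * θ) * (y ^ (p * θ + α - 1) - x ^ (p * θ + α - 1)) := by
      apply mul_pos (mul_pos hB (by linarith)) (by linarith)
    nlinarith [g1, g2]
  have hev : ∀ t : ℝ, 0 < t → ψ =ᶠ[𝓝 t] f := by
    intro t ht
    filter_upwards [Ioi_mem_nhds ht] with s hs using hψf s hs
  have hlocmax : IsLocalMax ψ tmax := by
    filter_upwards [Ioi_mem_nhds htmax] with s hs using hmax s hs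
  have hhtmax : h tmax = 0 := by
    have hd0 : deriv ψ tmax = 0 := hlocmax.deriv_eq_zero
    have hd1 : deriv ψ tmax = f' tmax := ((hev tmax htmax).deriv_eq).trans (hder tmax htmax).deriv
    have hpos : (0:ℝ) < tmax ^ (-(q + α)) := Real.rpow_pos_of_pos htmax _
    have : h tmax * tmax ^ (-(q + α)) = 0 := by rw [← hfh tmax htmax, ← hd1, hd0]
    rcases mul_eq_zero.1 this with h' | h'
    · exact h'
    · exact absurd h' hpos.ne'
  have hhpos : ∀ t : ℝ, 0 < t → t < tmax → 0 < h t := by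
    intro t ht htm
    have := hanti t tmax ht htm
    linarith [hhtmax]
  have hhneg : ∀ t : ℝ, tmax < t → h t < 0 := by
    intro t htm
    have := hanti tmax t htmax htm
    linarith [hhtmax]
  have hf'pos : ∀ t : ℝ, 0 < t → t < tmax → 0 < f' t := by
    intro t ht htm
    rw [hfh t ht]
    exact mul_pos (hhpos t ht htm) (Real.rpow_pos_of_pos ht _)
  have hf'neg : ∀ t : ℝ, tmax < t → f' t < 0 := by
    intro t htm
    have ht : 0 < t := lt_trans htmax htm
    rw [hfh t ht]
    exact mul_neg_of_neg_of_pos (hhneg t htm) (Real.rpow_pos_of_pos ht _)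
  have hcont : ∀ t : ℝ, 0 < t → ContinuousAt f t := fun t ht => (hder t ht).continuousAt
  -- strict monotone on (0, tmax]
  have hmono : ∀ x y : ℝ, 0 < x → x < y → y ≤ tmax → f x < f y := by
    intro x y hx hxy hy
    have hsm : StrictMonoOn f (Icc x y) := by
      apply strictMonoOn_of_deriv_pos (convex_Icc x y)
      · intro s hs; exact (hcont s (lt_of_lt_of_le hx hs.1)).continuousWithinAt
      · intro s hs
        rw [interior_Icc] at hs
        have hs0 : 0 < s := lt_trans hx hs.1
        rw [(hder s hs0).deriv]
        exact hf'pos s hs0 (lt_of_lt_of_le hs.2 hy)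
    exact hsm (left_mem_Icc.2 hxy.le) (right_mem_Icc.2 hxy.le) hxy
  have hanti2 : ∀ x y : ℝ, tmax ≤ x → x < y → f y < f x := by
    intro x y hx hxy
    have hsa : StrictAntiOn f (Icc x y) := by
      apply strictAntiOn_of_deriv_neg (convex_Icc x y)
      · intro s hs
        exact (hcont s (lt_of_lt_of_le (lt_of_lt_of_le htmax hx) hs.1)).continuousWithinAt
      · intro s hs
        rw [interior_Icc] at hs
        have hs0 : 0 < s := lt_trans (lt_of_lt_of_le htmax hx) hs.1
        rw [(hder s hs0).deriv]
        exact hf'neg s (lt_of_le_of_lt hx hs.1)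
    exact hsa (left_mem_Icc.2 hxy.le) (right_mem_Icc.2 hxy.le) hxy
  -- limit at infinity
  have hlim : Tendsto f atTop (𝓝 0) := by
    have l1 : Tendsto (fun t : ℝ => t ^ (p - q)) atTop (𝓝 0) := by
      have := tendsto_rpow_neg_atTop (show (0:ℝ) < q - p by linarith)
      rwa [show -(q - p) = p - q by ring] at this
    have l2 : Tendsto (fun t : ℝ => t ^ (p * θ - q)) atTop (𝓝 0) := by
      have := tendsto_rpow_neg_atTop (show (0:ℝ) < q - p * θ by linarith)
      rwa [show -(q - p * θ) = p * θ - q by ring] at this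
    have l3 : Tendsto (fun t : ℝ => t ^ (1 - α - q)) atTop (𝓝 0) := by
      have := tendsto_rpow_neg_atTop (show (0:ℝ) < q + α - 1 by linarith)
      rwa [show -(q + α - 1) = 1 - α - q by ring] at this
    have := ((l1.const_mul A).add (l2.const_mul B)).sub (l3.const_mul C)
    simpa using this
  have hftail : ∀ t : ℝ, tmax ≤ t → 0 < f t := by
    intro t htm
    have h1 : f (t + 1) < f t := hanti2 t (t + 1) htm (by linarith)
    have h2 : (0:ℝ) ≤ f (t + 1) := by
      refine le_of_tendsto hlim ?_
      filter_upwards [eventually_gt_atTop (t + 1)] with s hs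
      exact (hanti2 (t + 1) s (by linarith) hs).le
    linarith
  -- limit at 0+
  have hrepr : ∀ t : ℝ, 0 < t →
      f t = t ^ (1 - α - q) * (A * t ^ (p + α - 1) + B * t ^ (p * θ + α - 1) - C) := by
    intro t ht
    simp only [hfdef]
    rw [show p - q = (1 - α - q) + (p + α - 1) by ring,
        show p * θ - q = (1 - α - q) + (p * θ + α - 1) by ring,
        Real.rpow_add ht, Real.rpow_add ht]
    ring
  have hlim0 : Tendsto f (𝓝[>] (0:ℝ)) atBot := by
    have h1 : Tendsto (fun t : ℝ => t ^ (1 - α - q)) (𝓝[>] (0:ℝ)) atTop := by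
      have hcomp := (tendsto_rpow_atTop hqα).comp (tendsto_inv_nhdsGT_zero (𝕜 := ℝ))
      refine hcomp.congr' ?_
      filter_upwards [self_mem_nhdsWithin] with t ht
      have ht0 : (0:ℝ) < t := ht
      simp only [Function.comp]
      rw [Real.inv_rpow ht0.le, ← Real.rpow_neg ht0.le,
          show -(q + α - 1) = 1 - α - q by ring]
    have h2 : Tendsto (fun t : ℝ => A * t ^ (p + α - 1) + B * t ^ (p * θ + α - 1) - C)
        (𝓝[>] (0:ℝ)) (𝓝 (-C)) := by
      have t1 : Tendsto (fun t : ℝ => t ^ (p + α - 1)) (𝓝[>] (0:ℝ)) (𝓝 0) := by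
        have := (Real.continuousAt_rpow_const 0 (p + α - 1) (Or.inr hpα.le)).tendsto
        rw [Real.zero_rpow hpα.ne'] at this
        exact this.mono_left nhdsWithin_le_nhds
      have t2 : Tendsto (fun t : ℝ => t ^ (p * θ + α - 1)) (𝓝[>] (0:ℝ)) (𝓝 0) := by
        have := (Real.continuousAt_rpow_const 0 (p * θ + α - 1) (Or.inr hpθα.le)).tendsto
        rw [Real.zero_rpow hpθα.ne'] at this
        exact this.mono_left nhdsWithin_le_nhds
      have := ((t1.const_mul A).add (t2.const_mul B)).sub_const C
      simpa using this
    have := h1.atTop_mul_neg (by linarith : -C < 0) h2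
    refine this.congr' ?_
    filter_upwards [self_mem_nhdsWithin] with t ht
    exact (hrepr t ht).symm
  -- pick t0 with f t0 < q*D
  have hqD : q * D ≤ 0 := mul_nonpos_iff.2 (Or.inl ⟨hq0.le, hD⟩)
  obtain ⟨t₀, ht₀, ht₀pos, ht₀max⟩ :
      ∃ t₀ : ℝ, f t₀ < q * D ∧ 0 < t₀ ∧ t₀ < tmax := by
    have h1 : ∀ᶠ t in 𝓝[>] (0:ℝ), f t < q * D := hlim0.eventually (eventually_lt_atBot _)
    have h2 : ∀ᶠ t in 𝓝[>] (0:ℝ), t < tmax :=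
      eventually_nhdsWithin_of_eventually_nhds (eventually_lt_nhds htmax)
    have h3 : ∀ᶠ t in 𝓝[>] (0:ℝ), 0 < t := eventually_mem_nhdsWithin
    obtain ⟨t, a, b, c⟩ := (h1.and (h3.and h2)).exists
    exact ⟨t, a, b, c⟩
  -- IVT
  have hcontOn : ContinuousOn ψ (Icc t₀ tmax) := by
    intro s hs
    have hs0 : 0 < s := lt_of_lt_of_le ht₀pos hs.1
    exact ((hcont s hs0).congr (hev s hs0).symm).continuousWithinAt
  have hftmax : 0 < f tmax := hftail tmax le_rfl
  have hsub := intermediate_value_Icc ht₀max.le hcontOn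
  obtain ⟨t₃, ht₃mem, ht₃eq⟩ : ∃ t₃ ∈ Icc t₀ tmax, ψ t₃ = q * D := by
    have : q * D ∈ Icc (ψ t₀) (ψ tmax) := by
      constructor
      · rw [hψf t₀ ht₀pos]; exact ht₀.le
      · rw [hψf tmax htmax]; linarith
    obtain ⟨t₃, hmem, heq⟩ := hsub this
    exact ⟨t₃, hmem, heq⟩
  have ht₃pos : 0 < t₃ := lt_of_lt_of_le ht₀pos ht₃mem.1
  have ht₃f : f t₃ = q * D := (hψf t₃ ht₃pos).symm.trans ht₃eq
  have ht₃lt : t₃ < tmax := by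
    rcases lt_or_eq_of_le ht₃mem.2 with h' | h'
    · exact h'
    · exfalso; rw [h'] at ht₃f; linarith
  -- uniqueness
  have huniq : ∀ t, 0 < t → ψ t = q * D → t = t₃ := by
    intro t ht hteq
    have htf : f t = q * D := (hψf t ht).symm.trans hteq
    by_contra hne
    rcases lt_or_gt_of_ne hne with hlt | hgt
    · have := hmono t t₃ ht hlt ht₃lt.le
      rw [htf, ht₃f] at this; exact lt_irrefl _ this
    · rcases le_or_gt t tmax with hle | hgt2
      · have := hmono t₃ t ht₃pos hgt hle
        rw [htf, ht₃f] at this; exact lt_irrefl _ this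
      · have := hftail t hgt2.le
        rw [htf] at this; linarith
  have hderψ : 0 < deriv ψ t₃ := by
    have : deriv ψ t₃ = f' t₃ := ((hev t₃ ht₃pos).deriv_eq).trans (hder t₃ ht₃pos).deriv
    rw [this]; exact hf'pos t₃ ht₃pos ht₃lt
  -- the fiber map
  set g : ℝ → ℝ := fun t => t ^ p / p * A + t ^ (p * θ) / (p * θ) * B
    - t ^ (1 - α) / (1 - α) * C - t ^ q * D with hgdef
  set g' : ℝ → ℝ := fun t => t ^ (q - 1) * (f t - q * D) with hg'def
  have hφg : ∀ t : ℝ, 0 < t → φ t = g t := fun t ht => hφ t ht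
  have hgder : ∀ t : ℝ, 0 < t → HasDerivAt g (g' t) t := by
    intro t ht
    have h1 : HasDerivAt (fun t : ℝ => t ^ p / p * A) (p * t ^ (p - 1) / p * A) t :=
      ((Real.hasDerivAt_rpow_const (p := p) (Or.inl ht.ne')).div_const p).mul_const A
    have h2 : HasDerivAt (fun t : ℝ => t ^ (p * θ) / (p * θ) * B)
        (p * θ * t ^ (p * θ - 1) / (p * θ) * B) t :=
      ((Real.hasDerivAt_rpow_const (p := p * θ) (Or.inl ht.ne')).div_const (p * θ)).mul_const B
    have h3 : HasDerivAt (fun t : ℝ => t ^ (1 - α) / (1 - α) * C)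
        ((1 - α) * t ^ (1 - α - 1) / (1 - α) * C) t :=
      ((Real.hasDerivAt_rpow_const (p := 1 - α) (Or.inl ht.ne')).div_const (1 - α)).mul_const C
    have h4 : HasDerivAt (fun t : ℝ => t ^ q * D) (q * t ^ (q - 1) * D) t :=
      (Real.hasDerivAt_rpow_const (p := q) (Or.inl ht.ne')).mul_const D
    have key : g' t = p * t ^ (p - 1) / p * A + p * θ * t ^ (p * θ - 1) / (p * θ) * B
        - (1 - α) * t ^ (1 - α - 1) / (1 - α) * C - q * t ^ (q - 1) * D := by
      have e1 : t ^ (q - 1) * t ^ (p - q) = t ^ (p - 1) := by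
        rw [← Real.rpow_add ht]; congr 1; ring
      have e2 : t ^ (q - 1) * t ^ (p * θ - q) = t ^ (p * θ - 1) := by
        rw [← Real.rpow_add ht]; congr 1; ring
      have e3 : t ^ (q - 1) * t ^ (1 - α - q) = t ^ (1 - α - 1) := by
        rw [← Real.rpow_add ht]; congr 1; ring
      rw [mul_div_cancel_left₀ _ hp0.ne', mul_div_cancel_left₀ _ (by positivity : (0:ℝ) < p * θ).ne',
          mul_div_cancel_left₀ _ (by linarith : (0:ℝ) < 1 - α).ne']
      simp only [hg'def, hfdef]
      linear_combination A * e1 + B * e2 - C * e3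
    rw [key]
    exact ((h1.add h2).sub h3).sub h4
  have hevφ : ∀ t : ℝ, 0 < t → φ =ᶠ[𝓝 t] g := by
    intro t ht
    filter_upwards [Ioi_mem_nhds ht] with s hs using hφg s hs
  have hφcont : ∀ t : ℝ, 0 < t → ContinuousAt φ t :=
    fun t ht => ((hgder t ht).continuousAt).congr (hevφ t ht).symm
  have hφderiv : ∀ t : ℝ, 0 < t → deriv φ t = g' t :=
    fun t ht => ((hevφ t ht).deriv_eq).trans (hgder t ht).deriv
  have hmin : ∀ t, 0 < t → φ t₃ ≤ φ t := by
    intro t ht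
    rcases lt_trichotomy t t₃ with hlt | heq | hgt
    · have hsa : StrictAntiOn φ (Icc t t₃) := by
        apply strictAntiOn_of_deriv_neg (convex_Icc t t₃)
        · intro s hs; exact (hφcont s (lt_of_lt_of_le ht hs.1)).continuousWithinAt
        · intro s hs
          rw [interior_Icc] at hs
          have hs0 : 0 < s := lt_trans ht hs.1
          rw [hφderiv s hs0]
          have hfs : f s < q * D := by
            have := hmono s t₃ hs0 hs.2 ht₃lt.le
            rwa [ht₃f] at this
          simp only [hg'def]
          exact mul_neg_of_pos_of_neg (Real.rpow_pos_of_pos hs0 _) (by linarith)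
      exact (hsa (left_mem_Icc.2 hlt.le) (right_mem_Icc.2 hlt.le) hlt).le
    · rw [heq]
    · have hsm : StrictMonoOn φ (Icc t₃ t) := by
        apply strictMonoOn_of_deriv_pos (convex_Icc t₃ t)
        · intro s hs; exact (hφcont s (lt_of_lt_of_le ht₃pos hs.1)).continuousWithinAt
        · intro s hs
          rw [interior_Icc] at hs
          have hs0 : 0 < s := lt_trans ht₃pos hs.1
          rw [hφderiv s hs0]
          have hfs : q * D < f s := by
            rcases le_or_gt s tmax with hle | hgt2
            · have := hmono t₃ s ht₃pos hs.1 hle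
              rwa [ht₃f] at this
            · have := hftail s hgt2.le
              linarith
          simp only [hg'def]
          exact mul_pos (Real.rpow_pos_of_pos hs0 _) (by linarith)
      exact (hsm (left_mem_Icc.2 hgt.le) (right_mem_Icc.2 hgt.le) hgt).le
  exact ⟨t₃, ht₃pos, ht₃eq, huniq, ht₃lt, hderψ, hmin⟩
end

section
/- Let p, q, θ, α be real numbers with 0 < α < 1 < p, θ > 1 and p·θ < q, let A, B, C > 0 and E be real numbers satisfying A + B − C − q·E = 0 and (q+α−1)·C > (q−p)·A + (q−p·θ)·B. Then A/p + B/(p·θ) − C/(1−α) − E ≤ −((q−p)(p+α−1)/(q·p·(1−α)))·A − ((q−p·θ)(p·θ+α−1)/(q·p·θ·(1−α)))·B < 0. -/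
open Set Filter Topology

/-- Algebraic content of Corollary 4.1: on the Nehari set N_λ⁺ the energy
A/p + B/(pθ) − C/(1−α) − E is negative, with the stated quantitative bound. -/
theorem stmt_9 (p q θ α A B C E : ℝ)
    (hα0 : 0 < α) (hα1 : α < 1) (hp : 1 < p) (hθ : 1 < θ) (hpq : p * θ < q)
    (hA : 0 < A) (hB : 0 < B) (hC : 0 < C)
    (h1 : A + B - C - q * E = 0)
    (h2 : (q - p) * A + (q - p * θ) * B < (q + α - 1) * C) :
    A / p + B / (p * θ) - C / (1 - α) - E ≤
      -((q - p) * (p + α - 1) / (q * p * (1 - α))) * A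
        - ((q - p * θ) * (p * θ + α - 1) / (q * p * θ * (1 - α))) * B ∧
    -((q - p) * (p + α - 1) / (q * p * (1 - α))) * A
        - ((q - p * θ) * (p * θ + α - 1) / (q * p * θ * (1 - α))) * B < 0 := by
  have hp0 : (0:ℝ) < p := by linarith
  have hθ0 : (0:ℝ) < θ := by linarith
  have hpθ : (1:ℝ) < p * θ := by nlinarith
  have hq0 : (0:ℝ) < q := by linarith
  have h1α : (0:ℝ) < 1 - α := by linarith
  have hqp : p < q := by nlinarith
  have hE : E = (A + B - C) / q := by field_simp; linarith
  constructor
  · have key : (-((q - p) * (p + α - 1) / (q * p * (1 - α))) * A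
        - ((q - p * θ) * (p * θ + α - 1) / (q * p * θ * (1 - α))) * B)
        - (A / p + B / (p * θ) - C / (1 - α) - E)
        = ((q + α - 1) * C - ((q - p) * A + (q - p * θ) * B)) / (q * (1 - α)) := by
      rw [hE]; field_simp; ring
    have hpos : 0 < ((q + α - 1) * C - ((q - p) * A + (q - p * θ) * B)) / (q * (1 - α)) := by
      apply div_pos (by linarith) (by positivity)
    linarith
  · have t1 : 0 < (q - p) * (p + α - 1) / (q * p * (1 - α)) * A := by
      apply mul_pos _ hA
      apply div_pos (by nlinarith) (by positivity)
    have t2 : 0 < (q - p * θ) * (p * θ + α - 1) / (q * p * θ * (1 - α)) * B := by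
      apply mul_pos _ hB
      apply div_pos (by nlinarith) (by positivity)
    linarith
end

section
/- Let p, q, θ, α be real numbers with 0 < α < 1 < p, θ > 1 and p·θ < q, and let a, b, K, x > 0 be real numbers. If (q−p)·a·x^p + (q−p·θ)·b·x^(p·θ) ≤ (q+α−1)·K·x^(1−α), then x ≤ ( (q+α−1)·K / (2·√(a·b·(q−p)·(q−p·θ))) )^(2/(p·θ+p+2α−2)). -/
open Set Filter Topology

/-- Gap structure, upper bound: if (q−p)·a·x^p + (q−pθ)·b·x^(pθ) ≤ (q+α−1)·K·x^(1−α)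
then x ≤ ((q+α−1)K / (2√(ab(q−p)(q−pθ))))^(2/(pθ+p+2α−2)). -/
theorem stmt_10 (p q θ α a b K x : ℝ)
    (hα0 : 0 < α) (hα1 : α < 1) (hp : 1 < p) (hθ : 1 < θ) (hpq : p * θ < q)
    (ha : 0 < a) (hb : 0 < b) (hK : 0 < K) (hx : 0 < x)
    (h : (q - p) * a * x ^ p + (q - p * θ) * b * x ^ (p * θ) ≤
      (q + α - 1) * K * x ^ (1 - α)) :
    x ≤ ((q + α - 1) * K / (2 * Real.sqrt (a * b * (q - p) * (q - p * θ))))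
        ^ (2 / (p * θ + p + 2 * α - 2)) := by
  have hqpθ : 0 < q - p * θ := by linarith
  have hqp : 0 < q - p := by nlinarith
  have hqα : 0 < q + α - 1 := by nlinarith
  set s := Real.sqrt (a * b * (q - p) * (q - p * θ)) with hs
  have hs0 : 0 < s := Real.sqrt_pos.mpr (by positivity)
  set A := (q - p) * a * x ^ p with hA
  set B := (q - p * θ) * b * x ^ (p * θ) with hB
  have hxA : 0 < A := by positivity
  have hxB : 0 < B := by positivity
  have hAB : Real.sqrt (A * B) = s * x ^ ((p + p * θ) / 2) := by
    rw [hs, hA, hB, show (q - p) * a * x ^ p * ((q - p * θ) * b * x ^ (p * θ))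
        = (a * b * (q - p) * (q - p * θ)) * (x ^ p * x ^ (p * θ)) by ring,
      ← Real.rpow_add hx, Real.sqrt_mul (by positivity),
      Real.sqrt_eq_rpow (x ^ _), ← Real.rpow_mul hx.le, mul_one_div]
  have hamgm : 2 * (s * x ^ ((p + p * θ) / 2)) ≤ A + B := by
    rw [← hAB, Real.sqrt_mul hxA.le]
    nlinarith [sq_nonneg (Real.sqrt A - Real.sqrt B), Real.sq_sqrt hxA.le,
      Real.sq_sqrt hxB.le]
  have h2 : 2 * s * x ^ ((p + p * θ) / 2) ≤ (q + α - 1) * K * x ^ (1 - α) := by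
    nlinarith
  set e := (p * θ + p + 2 * α - 2) / 2 with he
  have he0 : 0 < e := by rw [he]; nlinarith
  have hkey : x ^ e ≤ (q + α - 1) * K / (2 * s) := by
    have hsplit : x ^ ((p + p * θ) / 2) = x ^ e * x ^ (1 - α) := by
      rw [← Real.rpow_add hx, he]; ring_nf
    rw [hsplit] at h2
    rw [div_eq_inv_mul, ← mul_le_mul_iff_of_pos_right (Real.rpow_pos_of_pos hx (1 - α))]
    calc x ^ e * x ^ (1 - α) = (2 * s)⁻¹ * (2 * s * (x ^ e * x ^ (1 - α))) := by
          field_simp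
      _ ≤ (2 * s)⁻¹ * ((q + α - 1) * K * x ^ (1 - α)) := by
          apply mul_le_mul_of_nonneg_left _ (by positivity)
          linarith [h2]
      _ = (2 * s)⁻¹ * ((q + α - 1) * K) * x ^ (1 - α) := by ring
  have hfin : x = (x ^ e) ^ (1 / e) := by
    rw [← Real.rpow_mul hx.le, mul_one_div, div_self he0.ne', Real.rpow_one]
  have hrw : 2 / (p * θ + p + 2 * α - 2) = 1 / e := by
    rw [he, one_div, inv_div]
  rw [hrw, hfin]
  exact Real.rpow_le_rpow (by positivity) hkey (by positivity)
end

section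
/- Let p, q, θ, α be real numbers with 0 < α < 1 < p, θ > 1 and p·θ < q, and let a, b, K_c, K_F, λ, x > 0 be real numbers. If (q−p)·a·x^p + (q−p·θ)·b·x^(p·θ) ≤ (q+α−1)·K_c·x^(1−α) and (p+α−1)·a·x^p + (p·θ+α−1)·b·x^(p·θ) ≤ λ·q·(q+α−1)·K_F·x^q, then λ ≥ (2·√(a·b·(p+α−1)·(p·θ+α−1)) / (q·(q+α−1)·K_F)) · ( (q+α−1)·K_c / (2·√(a·b·(q−p)·(q−p·θ))) )^(−(2q−p−p·θ)/(p·θ+p+2α−2)). -/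
open Set Filter Topology

/-- AM-GM for two weighted powers. -/
lemma amgm_pow (x c1 c2 p1 p2 : ℝ) (hx : 0 < x) (h1 : 0 ≤ c1) (h2 : 0 ≤ c2) :
    2 * Real.sqrt (c1 * c2) * x ^ ((p1 + p2) / 2) ≤ c1 * x ^ p1 + c2 * x ^ p2 := by
  have hu : 0 ≤ c1 * x ^ p1 := by positivity
  have hv : 0 ≤ c2 * x ^ p2 := by positivity
  have hsq : Real.sqrt (x ^ (p1 + p2)) = x ^ ((p1 + p2) / 2) := by
    rw [Real.sqrt_eq_rpow, ← Real.rpow_mul hx.le]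
    congr 1; ring
  have hmul : (c1 * x ^ p1) * (c2 * x ^ p2) = (c1 * c2) * x ^ (p1 + p2) := by
    rw [Real.rpow_add hx]; ring
  have key : 2 * Real.sqrt ((c1 * x ^ p1) * (c2 * x ^ p2)) ≤ c1 * x ^ p1 + c2 * x ^ p2 := by
    nlinarith [sq_nonneg (Real.sqrt (c1 * x ^ p1) - Real.sqrt (c2 * x ^ p2)),
      Real.sq_sqrt hu, Real.sq_sqrt hv, Real.sqrt_mul hu (c2 * x ^ p2)]
  calc 2 * Real.sqrt (c1 * c2) * x ^ ((p1 + p2) / 2)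
      = 2 * Real.sqrt ((c1 * x ^ p1) * (c2 * x ^ p2)) := by
        rw [hmul, Real.sqrt_mul (by positivity) (x ^ (p1 + p2)), hsq]; ring
    _ ≤ c1 * x ^ p1 + c2 * x ^ p2 := key

/-- Lemma 3.2: a nonzero element of the degenerate Nehari set N_λ⁰ forces λ ≥ λ_{**}. -/
theorem stmt_12 (p q θ α a b Kc KF lam x : ℝ)
    (hα0 : 0 < α) (hα1 : α < 1) (hp : 1 < p) (hθ : 1 < θ) (hpq : p * θ < q)
    (ha : 0 < a) (hb : 0 < b) (hKc : 0 < Kc) (hKF : 0 < KF)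
    (hlam : 0 < lam) (hx : 0 < x)
    (h1 : (q - p) * a * x ^ p + (q - p * θ) * b * x ^ (p * θ) ≤
      (q + α - 1) * Kc * x ^ (1 - α))
    (h2 : (p + α - 1) * a * x ^ p + (p * θ + α - 1) * b * x ^ (p * θ) ≤
      lam * q * (q + α - 1) * KF * x ^ q) :
    (2 * Real.sqrt (a * b * (p + α - 1) * (p * θ + α - 1)) / (q * (q + α - 1) * KF)) *
      ((q + α - 1) * Kc / (2 * Real.sqrt (a * b * (q - p) * (q - p * θ))))
        ^ (-((2 * q - p - p * θ) / (p * θ + p + 2 * α - 2))) ≤ lam := by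
  have hpθ1 : 1 < p * θ := by nlinarith
  have hqp : 0 < q - p := by nlinarith
  have hqpθ : 0 < q - p * θ := by linarith
  have hpα : 0 < p + α - 1 := by linarith
  have hpθα : 0 < p * θ + α - 1 := by nlinarith
  have hqα : 0 < q + α - 1 := by nlinarith
  have hq0 : 0 < q := by nlinarith
  set D1 := a * b * (q - p) * (q - p * θ) with hD1
  set D2 := a * b * (p + α - 1) * (p * θ + α - 1) with hD2
  have hD1pos : 0 < D1 := by positivity
  have hD2pos : 0 < D2 := by positivity
  have hs1 : 0 < Real.sqrt D1 := Real.sqrt_pos.mpr hD1pos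
  have hs2 : 0 < Real.sqrt D2 := Real.sqrt_pos.mpr hD2pos
  set s : ℝ := (p + p * θ) / 2 with hs
  -- Step A
  have hA : 2 * Real.sqrt D1 * x ^ s ≤ (q + α - 1) * Kc * x ^ (1 - α) := by
    have h := amgm_pow x ((q - p) * a) ((q - p * θ) * b) p (p * θ) hx
      (by positivity) (by positivity)
    have hD : (q - p) * a * ((q - p * θ) * b) = D1 := by rw [hD1]; ring
    rw [hD] at h
    calc 2 * Real.sqrt D1 * x ^ s ≤ (q - p) * a * x ^ p + (q - p * θ) * b * x ^ (p * θ) := h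
      _ ≤ (q + α - 1) * Kc * x ^ (1 - α) := h1
  -- Step B
  have hB : 2 * Real.sqrt D2 * x ^ s ≤ lam * q * (q + α - 1) * KF * x ^ q := by
    have h := amgm_pow x ((p + α - 1) * a) ((p * θ + α - 1) * b) p (p * θ) hx
      (by positivity) (by positivity)
    have hD : (p + α - 1) * a * ((p * θ + α - 1) * b) = D2 := by rw [hD2]; ring
    rw [hD] at h
    calc 2 * Real.sqrt D2 * x ^ s
        ≤ (p + α - 1) * a * x ^ p + (p * θ + α - 1) * b * x ^ (p * θ) := h
      _ ≤ lam * q * (q + α - 1) * KF * x ^ q := h2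
  set e1 : ℝ := s - (1 - α) with he1def
  set e2 : ℝ := s - q with he2def
  have hplt : p < p * θ := by nlinarith
  have he1 : 0 < e1 := by rw [he1def, hs]; linarith
  have he2 : e2 < 0 := by rw [he2def, hs]; linarith
  set C1 := (q + α - 1) * Kc / (2 * Real.sqrt D1) with hC1
  have hC1pos : 0 < C1 := by positivity
  -- From A: x ^ e1 ≤ C1
  have hx1a : x ^ (1 - α) > 0 := Real.rpow_pos_of_pos hx _
  have hxq : x ^ q > 0 := Real.rpow_pos_of_pos hx _
  have hsplitA : x ^ s = x ^ e1 * x ^ (1 - α) := by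
    rw [← Real.rpow_add hx]; congr 1; rw [he1def]; ring
  have hsplitB : x ^ s = x ^ e2 * x ^ q := by
    rw [← Real.rpow_add hx]; congr 1; rw [he2def]; ring
  have hA2 : 2 * Real.sqrt D1 * x ^ e1 ≤ (q + α - 1) * Kc := by
    have key : (2 * Real.sqrt D1 * x ^ e1) * x ^ (1 - α)
        ≤ ((q + α - 1) * Kc) * x ^ (1 - α) := by
      calc (2 * Real.sqrt D1 * x ^ e1) * x ^ (1 - α)
          = 2 * Real.sqrt D1 * (x ^ e1 * x ^ (1 - α)) := by ring
        _ ≤ ((q + α - 1) * Kc) * x ^ (1 - α) := by rw [← hsplitA]; exact hA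
    exact le_of_mul_le_mul_right key hx1a
  have hxe1 : x ^ e1 ≤ C1 := by
    rw [hC1, le_div_iff₀ (by positivity)]
    calc x ^ e1 * (2 * Real.sqrt D1) = 2 * Real.sqrt D1 * x ^ e1 := by ring
      _ ≤ (q + α - 1) * Kc := hA2
  have hxle : x ≤ C1 ^ (1 / e1) := by
    have h := Real.rpow_le_rpow (by positivity) hxe1 (le_of_lt (by positivity : (0:ℝ) < 1 / e1))
    rwa [← Real.rpow_mul hx.le, mul_one_div, div_self he1.ne', Real.rpow_one] at h
  -- From B: lam ≥ (2√D2/(q(q+α-1)KF)) * x ^ e2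
  have hB' : 2 * Real.sqrt D2 / (q * (q + α - 1) * KF) * x ^ e2 ≤ lam := by
    have key : (2 * Real.sqrt D2 * x ^ e2) * x ^ q
        ≤ (lam * (q * (q + α - 1) * KF)) * x ^ q := by
      calc (2 * Real.sqrt D2 * x ^ e2) * x ^ q
          = 2 * Real.sqrt D2 * (x ^ e2 * x ^ q) := by ring
        _ ≤ lam * q * (q + α - 1) * KF * x ^ q := by rw [← hsplitB]; exact hB
        _ = (lam * (q * (q + α - 1) * KF)) * x ^ q := by ring
    have hB2 := le_of_mul_le_mul_right key hxq
    rw [div_mul_eq_mul_div, div_le_iff₀ (by positivity)]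
    linarith [hB2]
  -- compare x ^ e2 with C1 ^ (e2 / e1)
  have hpow : C1 ^ (-((2 * q - p - p * θ) / (p * θ + p + 2 * α - 2))) ≤ x ^ e2 := by
    have h := Real.rpow_le_rpow_of_nonpos hx hxle he2.le
    rw [← Real.rpow_mul hC1pos.le] at h
    have hexp : 1 / e1 * e2 = -((2 * q - p - p * θ) / (p * θ + p + 2 * α - 2)) := by
      rw [he1def, he2def, hs]
      have h2A : p * θ + p + 2 * α - 2 = 2 * ((p + p * θ) / 2 - (1 - α)) := by ring
      have h2B : 2 * q - p - p * θ = -(2 * ((p + p * θ) / 2 - q)) := by ring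
      rw [h2A, h2B, neg_div, neg_neg,
        mul_div_mul_left _ _ (two_ne_zero), one_div, ← div_eq_inv_mul]
    rwa [hexp] at h
  calc 2 * Real.sqrt D2 / (q * (q + α - 1) * KF) *
        C1 ^ (-((2 * q - p - p * θ) / (p * θ + p + 2 * α - 2)))
      ≤ 2 * Real.sqrt D2 / (q * (q + α - 1) * KF) * x ^ e2 := by
        apply mul_le_mul_of_nonneg_left hpow (by positivity)
    _ ≤ lam := hB'
end
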